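/- Let A_1, A_2, …, A_n be n ≥ 3 points in a δ-hyperbolic geodesic metric space satisfying: (i) |A_{i−1}A_{i+1}| ≥ |A_{i−1}A_i| + |A_iA_{i+1}| − 2δ for every 2 ≤ i ≤ n−1, and (ii) |A_{i−1}A_i| > (2n−3)δ for every 3 ≤ i ≤ n−1. Then |A_1A_n| ≥ Σ_{i=1}^{n−1} |A_iA_{i+1}| − (4n−10)δ. -/
import Mathlib


/-- `f` parametrizes a geodesic segment from `a` to `b` (by arc length on
`[0, dist a b]`). -/
def IsGeodSeg {X : Type*} [MetricSpace X] (f : ℝ → X) (a b : X) : Prop :=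
  f 0 = a ∧ f (dist a b) = b ∧
    ∀ s ∈ Set.Icc (0 : ℝ) (dist a b), ∀ t ∈ Set.Icc (0 : ℝ) (dist a b),
      dist (f s) (f t) = |s - t|

/-- A geodesic metric space: any two points are joined by a geodesic. -/
def GeodesicSpace (X : Type*) [MetricSpace X] : Prop :=
  ∀ a b : X, ∃ f : ℝ → X, IsGeodSeg f a b

/-- All geodesic triangles of `X` are `δ`-thin: for any two geodesic sides
issuing from a common vertex `a`, the points at equal parameter
`t ≤ (d(a,b) + d(a,c) - d(b,c))/2` on the two sides are at distance `≤ δ`. -/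
def SlimTriangles (X : Type*) [MetricSpace X] (δ : ℝ) : Prop :=
  ∀ (a b c : X) (f g : ℝ → X), IsGeodSeg f a b → IsGeodSeg g a c →
    ∀ t : ℝ, 0 ≤ t → t ≤ (dist a b + dist a c - dist b c) / 2 →
      dist (f t) (g t) ≤ δ

/-- Gromov product. -/
noncomputable def gp {X : Type*} [MetricSpace X] (w x y : X) : ℝ :=
  (dist w x + dist w y - dist x y) / 2

lemma gp_nonneg {X : Type*} [MetricSpace X] (w x y : X) : 0 ≤ gp w x y := by
  have h := dist_triangle x w y
  unfold gp
  rw [dist_comm x w] at h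
  linarith

lemma gp_le_dist {X : Type*} [MetricSpace X] (w x y : X) : gp w x y ≤ dist w x := by
  have h := dist_triangle w x y
  have h2 := dist_triangle w y x  -- not needed maybe
  unfold gp
  have := dist_triangle w y x
  rw [dist_comm y x] at this
  linarith

lemma gp_comm {X : Type*} [MetricSpace X] (w x y : X) : gp w x y = gp w y x := by
  unfold gp; rw [dist_comm x y]; ring

lemma gp_add {X : Type*} [MetricSpace X] (w x y : X) :
    gp w x y + gp y x w = dist w y := by
  unfold gp
  rw [dist_comm y x, dist_comm y w, dist_comm x w]
  ring

/-- Four-point inequality from slim triangles. -/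
lemma fourpoint {X : Type*} [MetricSpace X] {δ : ℝ}
    (hgeo : GeodesicSpace X) (hhyp : SlimTriangles X δ)
    (w x y z : X) : min (gp w x z) (gp w y z) - δ ≤ gp w x y := by
  obtain ⟨f, hf⟩ := hgeo w x
  obtain ⟨g, hg⟩ := hgeo w y
  obtain ⟨h, hh⟩ := hgeo w z
  set t := min (gp w x z) (gp w y z) with ht
  have ht0 : 0 ≤ t := le_min (gp_nonneg _ _ _) (gp_nonneg _ _ _)
  have htx : t ≤ dist w x := (min_le_left _ _).trans (gp_le_dist _ _ _)
  have hty : t ≤ dist w y := (min_le_right _ _).trans (gp_le_dist _ _ _)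
  have d1 : dist (f t) (h t) ≤ δ :=
    hhyp w x z f h hf hh t ht0 (min_le_left _ _)
  have d2 : dist (g t) (h t) ≤ δ :=
    hhyp w y z g h hg hh t ht0 (min_le_right _ _)
  have hfx : dist x (f t) = dist w x - t := by
    have hd := hf.2.2 (dist w x) ⟨dist_nonneg, le_refl _⟩ t ⟨ht0, htx⟩
    rw [hf.2.1] at hd
    rw [hd, abs_of_nonneg (by linarith)]
  have hgy : dist y (g t) = dist w y - t := by
    have hd := hg.2.2 (dist w y) ⟨dist_nonneg, le_refl _⟩ t ⟨ht0, hty⟩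
    rw [hg.2.1] at hd
    rw [hd, abs_of_nonneg (by linarith)]
  have hxy : dist x y ≤ dist x (f t) + dist (f t) (h t) + dist (h t) (g t) + dist (g t) y := by
    have t4 := dist_triangle4 x (f t) (h t) (g t)
    have t1 := dist_triangle x (g t) y
    linarith
  have hcomm : dist (h t) (g t) = dist (g t) (h t) := dist_comm _ _
  have hcomm2 : dist (g t) y = dist y (g t) := dist_comm _ _
  unfold gp
  linarith [hxy, hfx, hgy]

/-- (Lemma 2.3 of the paper.)  If points `A 1, …, A n` (`n ≥ 3`) in a
`δ`-hyperbolic geodesic space satisfy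
(i) `|A_{i-1}A_{i+1}| ≥ |A_{i-1}A_i| + |A_iA_{i+1}| - 2δ` for `2 ≤ i ≤ n-1`, and
(ii) `|A_{i-1}A_i| > (2n-3)δ` for `3 ≤ i ≤ n-1`, then
`|A 1, A n| ≥ Σ_{i=1}^{n-1} |A_iA_{i+1}| - (4n-10)δ`. -/
theorem stmt5 {X : Type*} [MetricSpace X] (δ : ℝ) (hδ : 0 ≤ δ)
    (hgeo : GeodesicSpace X) (hhyp : SlimTriangles X δ)
    (n : ℕ) (hn : 3 ≤ n) (A : ℕ → X)
    (h1 : ∀ i : ℕ, 2 ≤ i → i ≤ n - 1 →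
      dist (A (i - 1)) (A (i + 1)) ≥
        dist (A (i - 1)) (A i) + dist (A i) (A (i + 1)) - 2 * δ)
    (h2 : ∀ i : ℕ, 3 ≤ i → i ≤ n - 1 →
      dist (A (i - 1)) (A i) > (2 * (n : ℝ) - 3) * δ) :
    dist (A 1) (A n) ≥
      (∑ i ∈ Finset.Icc 1 (n - 1), dist (A i) (A (i + 1))) - (4 * (n : ℝ) - 10) * δ := by
  -- gp bounds from h1
  have hgp1 : ∀ i : ℕ, 2 ≤ i → i ≤ n - 1 → gp (A i) (A (i-1)) (A (i+1)) ≤ δ := by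
    intro i hi2 hin
    have h := h1 i hi2 hin
    unfold gp
    rw [dist_comm (A i) (A (i-1))]
    linarith
  -- claim A : gp (A m) (A 1) (A (m+1)) ≤ 2δ for 2 ≤ m ≤ n-1
  have claimA : ∀ m : ℕ, 2 ≤ m → m ≤ n - 1 → gp (A m) (A 1) (A (m+1)) ≤ 2*δ := by
    intro m hm
    induction m, hm using Nat.le_induction with
    | base =>
      intro h2n
      have hb := hgp1 2 le_rfl h2n
      norm_num at hb
      linarith
    | succ m hm ih =>
      intro hm1n
      have hmn : m ≤ n - 1 := by omega
      have IH := ih hmn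
      have hb : gp (A (m+1)) (A m) (A (m+2)) ≤ δ := by
        have := hgp1 (m+1) (by omega) hm1n
        simpa using this
      have h4 := fourpoint hgeo hhyp (A (m+1)) (A m) (A (m+2)) (A 1)
      -- min (gp (A (m+1)) (A m) (A 1)) (gp (A (m+1)) (A (m+2)) (A 1)) ≤ 2δ
      have hmin : min (gp (A (m+1)) (A m) (A 1)) (gp (A (m+1)) (A (m+2)) (A 1)) ≤ 2*δ := by
        linarith
      rcases le_or_gt (gp (A (m+1)) (A m) (A 1)) (gp (A (m+1)) (A (m+2)) (A 1)) with hc | hc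
      · -- first term is the min: gp (A (m+1)) (A m) (A 1) ≤ 2δ, derive contradiction
        rw [min_eq_left hc] at hmin
        -- identity: gp (A (m+1)) (A 1) (A m) + gp (A m) (A 1) (A (m+1)) = dist (A (m+1)) (A m)
        have hid := gp_add (A (m+1)) (A 1) (A m)
        rw [gp_comm (A (m+1)) (A 1) (A m)] at hid
        have hd : dist (A (m+1)) (A m) ≤ 4*δ := by linarith
        have hlong := h2 (m+1) (by omega) hm1n
        simp only [Nat.add_sub_cancel] at hlong
        have hn4 : (4 : ℝ) ≤ (n : ℝ) := by exact_mod_cast (by omega : 4 ≤ n)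
        rw [dist_comm (A m) (A (m+1))] at hlong
        nlinarith
      · rw [min_eq_right hc.le] at hmin
        rw [gp_comm]
        exact hmin
  -- claim B : sum bound
  have claimB : ∀ m : ℕ, 2 ≤ m → m ≤ n - 1 →
      (∑ i ∈ Finset.Icc 1 m, dist (A i) (A (i+1))) - (4*(m:ℝ) - 6)*δ ≤
        dist (A 1) (A (m+1)) := by
    intro m hm
    induction m, hm using Nat.le_induction with
    | base =>
      intro h2n
      have hb := h1 2 le_rfl h2n
      norm_num at hb
      rw [Finset.sum_Icc_succ_top (by norm_num : (1:ℕ) ≤ 2), Finset.Icc_self,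
        Finset.sum_singleton]
      norm_num
      linarith
    | succ m hm ih =>
      intro hm1n
      have hmn : m ≤ n - 1 := by omega
      have IH := ih hmn
      have hA := claimA (m+1) (by omega) hm1n
      -- dist (A 1) (A (m+2)) = dist (A 1) (A (m+1)) + dist (A (m+1)) (A (m+2)) - 2 gp
      have hid : gp (A (m+1)) (A 1) (A (m+2)) =
          (dist (A (m+1)) (A 1) + dist (A (m+1)) (A (m+2)) - dist (A 1) (A (m+2))) / 2 := rfl
      rw [Finset.sum_Icc_succ_top (by omega : (1:ℕ) ≤ m + 1)]
      have hc : dist (A (m+1)) (A 1) = dist (A 1) (A (m+1)) := dist_comm _ _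
      push_cast
      rw [hid, hc] at hA
      have : (m:ℝ) + 1 + 1 = (m:ℝ) + 2 := by ring
      linarith
  have hfin := claimB (n-1) (by omega) le_rfl
  have hnn : n - 1 + 1 = n := by omega
  rw [hnn] at hfin
  have hcast : ((n - 1 : ℕ) : ℝ) = (n : ℝ) - 1 := by
    have : (1:ℕ) ≤ n := by omega
    push_cast [Nat.cast_sub this]
    ring
  rw [hcast] at hfin
  linarith
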